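/- arXiv:1808.09277 — 2 statements merged into one kernel-verified Lean document; each statement's English description precedes it below -/
import Mathlib

section
/- Let α > 2 be a real number. Then the function T ↦ ρ(T, α) := T^{2/α} · ∫_{T^{−2/α}}^∞ (1 + u^{α/2})^{−1} du is strictly increasing on (0, ∞). -/
open Real MeasureTheory Set

lemma rho_integrable (α : ℝ) (hα : 2 < α) {a : ℝ} (ha : 0 < a) :
    IntegrableOn (fun u : ℝ => (1 + u ^ (α / 2))⁻¹) (Ioi a) := by
  have hcont : ContinuousOn (fun u : ℝ => (1 + u ^ (α / 2))⁻¹) (Ioi a) := by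
    apply ContinuousOn.inv₀
    · exact continuousOn_const.add ((continuousOn_id).rpow_const
        (fun x hx => Or.inl (ne_of_gt (lt_trans ha hx))))
    · intro x hx
      have hx0 : 0 < x := lt_trans ha hx
      positivity
  have hbound : IntegrableOn (fun u : ℝ => u ^ (-(α / 2))) (Ioi a) :=
    integrableOn_Ioi_rpow_of_lt (by linarith) ha
  refine Integrable.mono' hbound
    (hcont.aestronglyMeasurable measurableSet_Ioi) ?_
  filter_upwards [ae_restrict_mem measurableSet_Ioi] with u hu
  have hu0 : 0 < u := lt_trans ha hu
  have h1 : (0:ℝ) < u ^ (α / 2) := rpow_pos_of_pos hu0 _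
  rw [Real.norm_eq_abs, abs_of_nonneg (by positivity), rpow_neg hu0.le]
  exact inv_anti₀ h1 (by linarith)

lemma rho_integral_pos (α : ℝ) (hα : 2 < α) {a : ℝ} (ha : 0 < a) :
    0 < ∫ u in Ioi a, (1 + u ^ (α / 2))⁻¹ := by
  have hint := rho_integrable α hα ha
  have hnn : 0 ≤ᵐ[volume.restrict (Ioi a)] fun u : ℝ => (1 + u ^ (α / 2))⁻¹ := by
    filter_upwards [ae_restrict_mem measurableSet_Ioi] with u hu
    have hu0 : 0 < u := lt_trans ha hu
    have : (0:ℝ) < u ^ (α / 2) := rpow_pos_of_pos hu0 _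
    positivity
  rw [setIntegral_pos_iff_support_of_nonneg_ae hnn hint]
  have hsub : Ioi a ⊆ Function.support (fun u : ℝ => (1 + u ^ (α / 2))⁻¹) ∩ Ioi a := by
    intro u hu
    have hu0 : 0 < u := lt_trans ha hu
    have : (0:ℝ) < u ^ (α / 2) := rpow_pos_of_pos hu0 _
    refine ⟨?_, hu⟩
    simp only [Function.mem_support]
    positivity
  calc (0:ENNReal) < volume (Ioi a) := by simp
    _ ≤ _ := measure_mono hsub

/-- For `α > 2`, the map
`T ↦ ρ(T,α) = T^{2/α} ∫_{T^{−2/α}}^∞ (1+u^{α/2})⁻¹ du` is strictly increasing on `(0, ∞)`. -/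
theorem rho_strictMono
    (α : ℝ) (hα : 2 < α) :
    StrictMonoOn
      (fun T : ℝ => T ^ (2 / α) * ∫ u in Ioi (T ^ (-(2 / α))), (1 + u ^ (α / 2))⁻¹)
      (Ioi 0) := by
  intro T1 hT1 T2 hT2 h12
  simp only [mem_Ioi] at hT1 hT2
  have hαpos : (0:ℝ) < α := by linarith
  have hepos : (0:ℝ) < 2 / α := by positivity
  have ha1 : (0:ℝ) < T1 ^ (-(2 / α)) := rpow_pos_of_pos hT1 _
  have ha2 : (0:ℝ) < T2 ^ (-(2 / α)) := rpow_pos_of_pos hT2 _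
  have hs : T1 ^ (2 / α) < T2 ^ (2 / α) := rpow_lt_rpow hT1.le h12 hepos
  have hs1 : (0:ℝ) < T1 ^ (2 / α) := rpow_pos_of_pos hT1 _
  have ha : T2 ^ (-(2 / α)) < T1 ^ (-(2 / α)) := rpow_lt_rpow_of_neg hT1 h12 (by linarith : -(2 / α) < 0)
  have hnn : 0 ≤ᵐ[volume.restrict (Ioi (T2 ^ (-(2 / α))))]
      fun u : ℝ => (1 + u ^ (α / 2))⁻¹ := by
    filter_upwards [ae_restrict_mem measurableSet_Ioi] with u hu
    have hu0 : 0 < u := lt_trans ha2 hu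
    have : (0:ℝ) < u ^ (α / 2) := rpow_pos_of_pos hu0 _
    positivity
  have hmono : (∫ u in Ioi (T1 ^ (-(2 / α))), (1 + u ^ (α / 2))⁻¹)
      ≤ ∫ u in Ioi (T2 ^ (-(2 / α))), (1 + u ^ (α / 2))⁻¹ := by
    apply setIntegral_mono_set (rho_integrable α hα ha2) hnn
    exact HasSubset.Subset.eventuallyLE (Ioi_subset_Ioi ha.le)
  have hpos1 := rho_integral_pos α hα ha1
  calc T1 ^ (2 / α) * ∫ u in Ioi (T1 ^ (-(2 / α))), (1 + u ^ (α / 2))⁻¹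
      < T2 ^ (2 / α) * ∫ u in Ioi (T1 ^ (-(2 / α))), (1 + u ^ (α / 2))⁻¹ :=
        (mul_lt_mul_iff_of_pos_right hpos1).mpr hs
    _ ≤ T2 ^ (2 / α) * ∫ u in Ioi (T2 ^ (-(2 / α))), (1 + u ^ (α / 2))⁻¹ := by
        apply mul_le_mul_of_nonneg_left hmono (rpow_pos_of_pos hT2 _).le
end

section
/- Let α > 2 and c ≥ 0 be real numbers, and for T > 0 set β(T) = 1 + ρ(T, α) where ρ(T, α) := T^{2/α} · ∫_{T^{−2/α}}^∞ (1 + u^{α/2})^{−1} du. Then the average data rate of a typical user in the interference-limited regime, E[R] = ∫_0^∞ 1/( β(e^t − 1) + (β(e^t − 1) − 1)·c ) dt, is finite. -/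
open Real MeasureTheory Set

/-- For `α > 2`, `c ≥ 0`, with `β(T) = 1 + ρ(T,α)` where
`ρ(T,α) = T^{2/α} ∫_{T^{−2/α}}^∞ (1+u^{α/2})⁻¹ du`, the average rate
`E[R] = ∫_0^∞ 1/(β(e^t − 1) + (β(e^t − 1) − 1)·c) dt` is finite, i.e., the
integrand is integrable on `(0, ∞)`. -/
theorem average_rate_finite
    (α c : ℝ) (hα : 2 < α) (hc : 0 ≤ c)
    (ρ : ℝ → ℝ)
    (hρ : ∀ T > 0, ρ T = T ^ (2 / α) * ∫ u in Ioi (T ^ (-(2 / α))), (1 + u ^ (α / 2))⁻¹)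
    (β : ℝ → ℝ) (hβ : ∀ T > 0, β T = 1 + ρ T) :
    IntegrableOn
      (fun t : ℝ => 1 / (β (Real.exp t - 1) + (β (Real.exp t - 1) - 1) * c))
      (Ioi 0) := by
  have hα0 : (0:ℝ) < α := lt_trans two_pos hα
  have hα2 : (0:ℝ) < 2 / α := div_pos two_pos hα0
  have hα2' : (1:ℝ) < α / 2 := by
    rw [lt_div_iff₀ two_pos]; linarith
  -- modified integrand, nonnegative everywhere
  set h : ℝ → ℝ := fun u => (1 + |u| ^ (α / 2))⁻¹ with hh
  have h_nonneg : ∀ u, 0 ≤ h u := by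
    intro u
    apply inv_nonneg.2
    have : (0:ℝ) ≤ |u| ^ (α/2) := rpow_nonneg (abs_nonneg u) _
    linarith
  have h_le_one : ∀ u, h u ≤ 1 := by
    intro u
    have h1 : (0:ℝ) ≤ |u| ^ (α/2) := rpow_nonneg (abs_nonneg u) _
    rw [hh]
    simp only
    rw [inv_le_one_iff₀]
    right; linarith
  have h_meas : Measurable h := by
    apply Measurable.inv
    have : Continuous fun u : ℝ => 1 + |u| ^ (α / 2) :=
      continuous_const.add (continuous_abs.rpow_const fun x => Or.inr (by positivity))
    exact this.measurable
  -- integrability of h on Ioi a for every a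
  have h_int : ∀ a : ℝ, IntegrableOn h (Ioi a) := by
    intro a
    have h1 : IntegrableOn h (Ioi (max a 1)) := by
      have hm1 : (0:ℝ) < max a 1 := lt_of_lt_of_le one_pos (le_max_right a 1)
      have hdom : IntegrableOn (fun u : ℝ => u ^ (-(α/2))) (Ioi (max a 1)) :=
        integrableOn_Ioi_rpow_of_lt (by linarith) hm1
      refine hdom.integrable.mono' (h_meas.aestronglyMeasurable) ?_
      filter_upwards [ae_restrict_mem measurableSet_Ioi] with u hu
      have hu1 : (1:ℝ) ≤ u := le_trans (le_max_right a 1) (le_of_lt hu)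
      have hu0 : (0:ℝ) < u := lt_of_lt_of_le one_pos hu1
      rw [Real.norm_eq_abs, abs_of_nonneg (h_nonneg u), hh]
      simp only
      rw [abs_of_pos hu0, rpow_neg hu0.le]
      have h2 : u ^ (α/2) ≤ 1 + u ^ (α/2) := by linarith
      have h3 : (0:ℝ) < u ^ (α/2) := rpow_pos_of_pos hu0 _
      exact inv_anti₀ h3 h2
    have h2 : IntegrableOn h (Ioc a (max a 1)) := by
      have hconst : IntegrableOn (fun _ : ℝ => (1:ℝ)) (Ioc a (max a 1)) :=
        integrableOn_const measure_Ioc_lt_top.ne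
      refine hconst.integrable.mono' h_meas.aestronglyMeasurable ?_
      filter_upwards with u
      rw [Real.norm_eq_abs, abs_of_nonneg (h_nonneg u)]
      exact h_le_one u
    have : Ioc a (max a 1) ∪ Ioi (max a 1) = Ioi a := Ioc_union_Ioi_eq_Ioi (le_max_left a 1)
    rw [← this]
    exact h2.union h1
  -- the antitone "tail integral" function
  set A : ℝ → ℝ := fun a => ∫ u in Ioi a, h u with hA
  have hA_nonneg : ∀ a, 0 ≤ A a := fun a =>
    setIntegral_nonneg measurableSet_Ioi fun u _ => h_nonneg u
  have hA_anti : Antitone A := by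
    intro a b hab
    refine setIntegral_mono_set (h_int a) ?_ ?_
    · filter_upwards with u using h_nonneg u
    · exact HasSubset.Subset.eventuallyLE (Ioi_subset_Ioi hab)
  have hA_meas : Measurable A := hA_anti.measurable
  -- positivity of K = A 1
  set K : ℝ := A 1 with hK
  have hKpos : 0 < K := by
    have hlow : ∀ u ∈ Ioc (1:ℝ) 2, (1 + (2:ℝ) ^ (α/2))⁻¹ ≤ h u := by
      intro u hu
      have hu0 : (0:ℝ) < u := lt_trans one_pos hu.1
      have habs : |u| ≤ 2 := by rw [abs_of_pos hu0]; exact hu.2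
      have h1 : |u| ^ (α/2) ≤ (2:ℝ) ^ (α/2) :=
        rpow_le_rpow (abs_nonneg u) habs (by linarith)
      have h2 : (0:ℝ) < 1 + |u| ^ (α/2) := by
        have := rpow_nonneg (abs_nonneg u) (α/2); linarith
      exact inv_anti₀ h2 (by linarith)
    have hsub : Ioc (1:ℝ) 2 ⊆ Ioi 1 := Ioc_subset_Ioi_self
    have hint2 : IntegrableOn h (Ioc (1:ℝ) 2) := (h_int 1).mono_set hsub
    have hge : (1 + (2:ℝ) ^ (α/2))⁻¹ * (volume (Ioc (1:ℝ) 2)).toReal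
        ≤ ∫ u in Ioc (1:ℝ) 2, h u :=
      setIntegral_ge_of_const_le_real measurableSet_Ioc measure_Ioc_lt_top.ne hlow hint2
    have hvol : (volume (Ioc (1:ℝ) 2)).toReal = 1 := by
      rw [Real.volume_Ioc]; norm_num
    have hcpos : (0:ℝ) < (1 + (2:ℝ) ^ (α/2))⁻¹ := by
      apply inv_pos.2
      have : (0:ℝ) ≤ (2:ℝ) ^ (α/2) := rpow_nonneg (by norm_num) _
      linarith
    have hmono : ∫ u in Ioc (1:ℝ) 2, h u ≤ A 1 := by
      refine setIntegral_mono_set (h_int 1) ?_ ?_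
      · filter_upwards with u using h_nonneg u
      · exact HasSubset.Subset.eventuallyLE hsub
    rw [hK]
    calc (0:ℝ) < (1 + (2:ℝ) ^ (α/2))⁻¹ * 1 := by linarith
    _ = (1 + (2:ℝ) ^ (α/2))⁻¹ * (volume (Ioc (1:ℝ) 2)).toReal := by rw [hvol]
    _ ≤ ∫ u in Ioc (1:ℝ) 2, h u := hge
    _ ≤ A 1 := hmono
  -- the explicit measurable substitute for the integrand
  set R : ℝ → ℝ := fun T => T ^ (2/α) * A ((T ^ (2/α))⁻¹) with hR
  set F : ℝ → ℝ := fun t =>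
      1 / ((1 + R (Real.exp t - 1)) + ((1 + R (Real.exp t - 1)) - 1) * c) with hF
  have hR_eq_ρ : ∀ T > 0, R T = ρ T := by
    intro T hT
    have hTpow : T ^ (-(2/α)) = (T ^ (2/α))⁻¹ := rpow_neg hT.le _
    have hpos : (0:ℝ) < T ^ (2/α) := rpow_pos_of_pos hT _
    have hinvpos : (0:ℝ) < (T ^ (2/α))⁻¹ := inv_pos.2 hpos
    have hcongr : ∫ u in Ioi ((T ^ (2/α))⁻¹), h u
        = ∫ u in Ioi (T ^ (-(2/α))), (1 + u ^ (α/2))⁻¹ := by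
      rw [hTpow]
      refine setIntegral_congr_fun measurableSet_Ioi ?_
      intro u hu
      have hu0 : (0:ℝ) < u := lt_trans hinvpos hu
      rw [hh]
      simp only
      rw [abs_of_pos hu0]
    rw [hρ T hT, hR]
    simp only [hA]
    rw [hcongr]
  have hR_nonneg : ∀ T > 0, 0 ≤ R T := by
    intro T hT
    exact mul_nonneg (rpow_nonneg hT.le _) (hA_nonneg _)
  -- F is measurable
  have hF_meas : Measurable F := by
    have hRm : Measurable R := by
      have h1 : Measurable fun T : ℝ => T ^ (2/α) :=
        (continuous_rpow_const hα2.le).measurable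
      exact h1.mul (hA_meas.comp h1.inv)
    have hinner : Measurable fun t : ℝ => R (Real.exp t - 1) :=
      hRm.comp ((Real.continuous_exp.measurable).sub measurable_const)
    apply Measurable.div measurable_const
    exact (measurable_const.add hinner).add
      (((measurable_const.add hinner).sub measurable_const).mul measurable_const)
  -- F agrees with the original integrand on (0,∞)
  have hEq : EqOn F
      (fun t : ℝ => 1 / (β (Real.exp t - 1) + (β (Real.exp t - 1) - 1) * c)) (Ioi 0) := by
    intro t ht
    have hTpos : (0:ℝ) < Real.exp t - 1 := by
      have h1 : (1:ℝ) < Real.exp t := by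
        calc (1:ℝ) = Real.exp 0 := (Real.exp_zero).symm
        _ < Real.exp t := Real.exp_lt_exp.2 ht
      linarith
    simp only [hF]
    rw [hβ _ hTpos, hR_eq_ρ _ hTpos]
  refine IntegrableOn.congr_fun ?_ hEq measurableSet_Ioi
  -- bounds on F
  have hden_ge_one : ∀ t ∈ Ioi (0:ℝ),
      1 ≤ (1 + R (Real.exp t - 1)) + ((1 + R (Real.exp t - 1)) - 1) * c := by
    intro t ht
    have hTpos : (0:ℝ) < Real.exp t - 1 := by
      have h1 : (1:ℝ) < Real.exp t := by
        calc (1:ℝ) = Real.exp 0 := (Real.exp_zero).symm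
        _ < Real.exp t := Real.exp_lt_exp.2 ht
      linarith
    have hRn := hR_nonneg _ hTpos
    have : 0 ≤ ((1 + R (Real.exp t - 1)) - 1) * c := by
      apply mul_nonneg _ hc; linarith
    linarith
  have hF_nonneg : ∀ t ∈ Ioi (0:ℝ), 0 ≤ F t := by
    intro t ht
    have := hden_ge_one t ht
    simp only [hF]
    positivity
  -- split the domain
  have hsplit : Ioc (0:ℝ) (Real.log 2) ∪ Ioi (Real.log 2) = Ioi (0:ℝ) :=
    Ioc_union_Ioi_eq_Ioi (Real.log_nonneg (by norm_num))
  rw [← hsplit]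
  apply IntegrableOn.union
  · -- bounded part
    have hconst : IntegrableOn (fun _ : ℝ => (1:ℝ)) (Ioc (0:ℝ) (Real.log 2)) :=
      integrableOn_const measure_Ioc_lt_top.ne
    refine hconst.integrable.mono' hF_meas.aestronglyMeasurable ?_
    filter_upwards [ae_restrict_mem measurableSet_Ioc] with t ht
    have ht0 : t ∈ Ioi (0:ℝ) := ht.1
    have h1 := hden_ge_one t ht0
    rw [Real.norm_eq_abs, abs_of_nonneg (hF_nonneg t ht0)]
    simp only [hF]
    rw [div_le_one (by linarith)]
    exact h1
  · -- tail part: dominated by C · exp(−(2/α)t)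
    set C : ℝ := (2:ℝ) ^ (2/α) / K with hC
    have hCpos : 0 < C := div_pos (rpow_pos_of_pos two_pos _) hKpos
    have hgint : IntegrableOn (fun t : ℝ => C * Real.exp (-(2/α) * t)) (Ioi (Real.log 2)) :=
      (exp_neg_integrableOn_Ioi (Real.log 2) hα2).const_mul C
    refine hgint.integrable.mono' hF_meas.aestronglyMeasurable ?_
    filter_upwards [ae_restrict_mem measurableSet_Ioi] with t ht
    have h2t : (2:ℝ) ≤ Real.exp t := by
      calc (2:ℝ) = Real.exp (Real.log 2) := (Real.exp_log two_pos).symm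
      _ ≤ Real.exp t := Real.exp_le_exp.2 ht.le
    have ht0 : t ∈ Ioi (0:ℝ) := by
      have : (0:ℝ) < Real.log 2 := Real.log_pos (by norm_num)
      exact lt_trans this ht
    set T : ℝ := Real.exp t - 1 with hT
    have hT1 : (1:ℝ) ≤ T := by rw [hT]; linarith
    have hTpos : (0:ℝ) < T := lt_of_lt_of_le one_pos hT1
    -- lower bound for R T
    have hpowpos : (0:ℝ) < T ^ (2/α) := rpow_pos_of_pos hTpos _
    have hpow1 : (1:ℝ) ≤ T ^ (2/α) := one_le_rpow hT1 hα2.le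
    have hAle : K ≤ A ((T ^ (2/α))⁻¹) := by
      apply hA_anti
      rw [inv_le_one_iff₀]; right; exact hpow1
    have hRge : K * T ^ (2/α) ≤ R T := by
      rw [hR]
      simp only
      calc K * T ^ (2/α) = T ^ (2/α) * K := by ring
      _ ≤ T ^ (2/α) * A ((T ^ (2/α))⁻¹) :=
        mul_le_mul_of_nonneg_left hAle hpowpos.le
    -- T^{2/α} ≥ exp((2/α)t) / 2^{2/α}
    have hThalf : Real.exp t / 2 ≤ T := by rw [hT]; linarith
    have hTpow_ge : Real.exp ((2/α) * t) / (2:ℝ) ^ (2/α) ≤ T ^ (2/α) := by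
      have h1 : (Real.exp t / 2) ^ (2/α) ≤ T ^ (2/α) := by
        apply rpow_le_rpow _ hThalf hα2.le
        positivity
      have h2 : (Real.exp t / 2) ^ (2/α)
          = Real.exp ((2/α) * t) / (2:ℝ) ^ (2/α) := by
        rw [Real.div_rpow (Real.exp_pos t).le (by norm_num)]
        congr 1
        rw [Real.rpow_def_of_pos (Real.exp_pos t), Real.log_exp, mul_comm]
      rw [← h2]; exact h1
    -- conclude
    have hD : K * (Real.exp ((2/α) * t) / (2:ℝ) ^ (2/α))
        ≤ (1 + R T) + ((1 + R T) - 1) * c := by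
      have hRn := hR_nonneg T hTpos
      have hc2 : 0 ≤ ((1 + R T) - 1) * c := mul_nonneg (by linarith) hc
      have h3 : K * (Real.exp ((2/α) * t) / (2:ℝ) ^ (2/α)) ≤ K * T ^ (2/α) :=
        mul_le_mul_of_nonneg_left hTpow_ge hKpos.le
      calc K * (Real.exp ((2/α) * t) / (2:ℝ) ^ (2/α)) ≤ K * T ^ (2/α) := h3
      _ ≤ R T := hRge
      _ ≤ (1 + R T) + ((1 + R T) - 1) * c := by linarith
    have hDpos : (0:ℝ) < K * (Real.exp ((2/α) * t) / (2:ℝ) ^ (2/α)) := by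
      apply mul_pos hKpos
      positivity
    rw [Real.norm_eq_abs, abs_of_nonneg (hF_nonneg t ht0)]
    simp only [hF]
    rw [div_le_iff₀ (by linarith : (0:ℝ) < (1 + R (Real.exp t - 1)) + ((1 + R (Real.exp t - 1)) - 1) * c)]
    have hexp : Real.exp (-(2/α) * t) = (Real.exp ((2/α) * t))⁻¹ := by
      rw [← Real.exp_neg]; ring_nf
    have key : 1 ≤ C * Real.exp (-(2/α) * t) * (K * (Real.exp ((2/α) * t) / (2:ℝ) ^ (2/α))) := by
      rw [hexp, hC]
      have hepos : (0:ℝ) < Real.exp ((2/α) * t) := Real.exp_pos _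
      have h2pos : (0:ℝ) < (2:ℝ) ^ (2/α) := rpow_pos_of_pos two_pos _
      field_simp
      exact le_refl _
    calc (1:ℝ) ≤ C * Real.exp (-(2/α) * t) * (K * (Real.exp ((2/α) * t) / (2:ℝ) ^ (2/α))) := key
    _ ≤ C * Real.exp (-(2/α) * t) * ((1 + R T) + ((1 + R T) - 1) * c) := by
        apply mul_le_mul_of_nonneg_left hD
        positivity
end
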